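/- Let A = M₄(ℂ[X,Y]) and let Γ = ℤ/2ℤ act on A by ε(P)(X,Y) = D·P(−X,−Y)·D⁻¹ where D = diag(1,1,−1,−1). Then in the crossed product A⋊Γ with e_Γ = ½(1 + [ε]), the two-sided ideal generated by e_Γ is all of A⋊Γ: (A⋊Γ)e_Γ(A⋊Γ) = A⋊Γ. -/

import Mathlib

open MvPolynomial

/-- `A := M₄(ℂ[X,Y])`. -/
noncomputable abbrev M4 : Type := Matrix (Fin 4) (Fin 4) (MvPolynomial (Fin 2) ℂ)

/-- `D = diag(1,1,−1,−1)`. -/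
noncomputable def D4 : M4 := Matrix.diagonal ![1, 1, -1, -1]

/-- The automorphism `ε` of `A = M₄(ℂ[X,Y])`: `ε(P)(X,Y) = D·P(−X,−Y)·D⁻¹`. -/
noncomputable def eps (P : M4) : M4 :=
  D4 * P.map (MvPolynomial.aeval (fun i => -(MvPolynomial.X i))) * D4⁻¹

/-- The action of `Γ = ℤ/2ℤ` on `A` with the nontrivial element acting by `ε`. -/
noncomputable def act (g : ZMod 2) (P : M4) : M4 := if g = 0 then P else eps P

/-- Multiplication in the crossed product `A ⋊ Γ`, elements being written as
functions `Γ → A`. -/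
noncomputable def crossedMul (f g : ZMod 2 → M4) : ZMod 2 → M4 :=
  fun γ => ∑ α : ZMod 2, f α * act α (g (γ - α))

/-- The idempotent `e_Γ = ½(1 + [ε])` of `A ⋊ Γ`. -/
noncomputable def eGamma : ZMod 2 → M4 := fun _ => (2 : ℂ)⁻¹ • (1 : M4)

lemma hDD : D4 * D4 = 1 := by
  ext i j
  fin_cases i <;> fin_cases j <;>
    simp [D4, Matrix.mul_apply, Fin.sum_univ_four, Matrix.one_apply]

lemma hDinv : D4⁻¹ = D4 := Matrix.inv_eq_right_inv hDD

lemma map_std (k i : Fin 4) :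
    (Matrix.single k i (1 : MvPolynomial (Fin 2) ℂ)).map
      (⇑(MvPolynomial.aeval (R := ℂ) (S₁ := MvPolynomial (Fin 2) ℂ)
        (fun j => -(MvPolynomial.X j)))) = Matrix.single k i 1 := by
  ext a b : 1
  simp only [Matrix.map_apply, Matrix.single, Matrix.of_apply,
    apply_ite (⇑(MvPolynomial.aeval (R := ℂ) (S₁ := MvPolynomial (Fin 2) ℂ)
      (fun j => -(MvPolynomial.X j)))), map_one, map_zero]

lemma eps_std (k i : Fin 4)
    (h : (![1,1,-1,-1] : Fin 4 → MvPolynomial (Fin 2) ℂ) k * ![1,1,-1,-1] i = -1) :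
    eps (Matrix.single k i 1) = -(Matrix.single k i 1) := by
  rw [eps, map_std, hDinv]
  ext a b : 1
  simp only [D4, Matrix.mul_diagonal, Matrix.diagonal_mul, Matrix.neg_apply]
  by_cases ha : a = k
  · by_cases hb : b = i
    · subst ha; subst hb
      rw [Matrix.single_apply_same, mul_one, h]
    · rw [show Matrix.single k i (1 : MvPolynomial (Fin 2) ℂ) a b = 0 from
        Matrix.single_apply_of_ne _ _ _ _ _ (by tauto)]; ring
  · rw [show Matrix.single k i (1 : MvPolynomial (Fin 2) ℂ) a b = 0 from
      Matrix.single_apply_of_ne _ _ _ _ _ (by tauto)]; ring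
open MvPolynomial

lemma eps_zero : eps 0 = 0 := by simp [eps]

lemma sum2 (g : ZMod 2 → M4) : ∑ α : ZMod 2, g α = g 0 + g 1 := Fin.sum_univ_two g

noncomputable def delta (a : M4) (s : ZMod 2) : ZMod 2 → M4 :=
  fun γ => if γ = s then a else 0

lemma act_zero (P : M4) : act 0 P = P := if_pos rfl
lemma act_one (P : M4) : act 1 P = eps P := if_neg (by decide)

lemma inner (a : M4) : crossedMul (delta a 0) eGamma = fun _ => (2:ℂ)⁻¹ • a := by
  funext γ
  rw [crossedMul, sum2, act_zero, act_one]
  simp only [delta, eGamma, if_pos rfl, if_neg (show (1:ZMod 2) ≠ 0 by decide), zero_mul,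
    add_zero, mul_smul_comm, mul_one]
  simp

lemma key (a b : M4) (s γ : ZMod 2) :
    crossedMul (crossedMul (delta a 0) eGamma) (delta b s) γ
      = if γ = s then (2:ℂ)⁻¹ • (a * b) else (2:ℂ)⁻¹ • (a * eps b) := by
  rw [crossedMul, sum2, _root_.inner, act_zero, act_one]
  by_cases h : γ = s
  · have h2 : ¬(γ - 1 = s) := by revert h; revert γ s; decide
    simp only [delta, if_pos h, if_neg h2, eps_zero, mul_zero, add_zero, smul_mul_assoc, sub_zero, if_pos h]
  · have h2 : γ - 1 = s := by revert h; revert γ s; decide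
    simp only [delta, if_neg h, if_pos h2, mul_zero, zero_add, smul_mul_assoc, sub_zero]
lemma hDD2 : D4 * D4 = 1 := hDD
lemma eps_one : eps 1 = 1 := by
  rw [eps, Matrix.map_one _ (map_zero _) (map_one _), mul_one, hDinv, hDD]

noncomputable def E (k i : Fin 4) : M4 := Matrix.single k i 1

lemma Emul (i k j : Fin 4) : E i k * E k j = E i j := by
  rw [E, E, E, Matrix.single_mul_single_same, one_mul]

lemma hsum : E 0 0 + E 1 1 + E 2 2 + E 3 3 = 1 := by
  ext a b : 1
  fin_cases a <;> fin_cases b <;>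
    simp [E, Matrix.single, Matrix.one_apply]

/-- In the crossed product `A ⋊ Γ`, `A = M₄(ℂ[X,Y])`,
`Γ = ℤ/2ℤ` acting by `ε(P)(X,Y) = D·P(−X,−Y)·D⁻¹` with `D = diag(1,1,−1,−1)`, the
two-sided ideal generated by `e_Γ = ½(1+[ε])` is all of `A ⋊ Γ`:
`(A⋊Γ)e_Γ(A⋊Γ) = A⋊Γ`, i.e. every element of `A ⋊ Γ` is a finite sum of elements of
the form `x·e_Γ·y`. -/
theorem ideal_of_eGamma_is_everything :
    ∀ f : ZMod 2 → M4, ∃ (n : ℕ) (x y : Fin n → (ZMod 2 → M4)),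
      f = ∑ i, crossedMul (crossedMul (x i) eGamma) (y i) := by
  intro f
  set c0 := f 0 with hc0def
  set c1 := f 1 with hc1def
  have e20 : eps (E 2 0) = -(E 2 0) := eps_std 2 0 (by norm_num [Matrix.cons_val_two, Matrix.cons_val_three])
  have e21 : eps (E 2 1) = -(E 2 1) := eps_std 2 1 (by norm_num [Matrix.cons_val_two, Matrix.cons_val_three])
  have e02 : eps (E 0 2) = -(E 0 2) := eps_std 0 2 (by norm_num [Matrix.cons_val_two, Matrix.cons_val_three])
  have e03 : eps (E 0 3) = -(E 0 3) := eps_std 0 3 (by norm_num [Matrix.cons_val_two, Matrix.cons_val_three])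
  refine ⟨10,
    fun i => delta ((![c0, c0 * E 0 2, c0 * E 1 2, c0 * E 2 0, c0 * E 3 0,
      c1, c1 * E 0 2, c1 * E 1 2, c1 * E 2 0, c1 * E 3 0] : Fin 10 → M4) i) 0,
    fun i => delta ((![1, E 2 0, E 2 1, E 0 2, E 0 3,
      1, E 2 0, E 2 1, E 0 2, E 0 3] : Fin 10 → M4) i)
      ((![0,0,0,0,0,1,1,1,1,1] : Fin 10 → ZMod 2) i), ?_⟩
  funext γ
  rw [Finset.sum_apply]
  simp only [key, Matrix.cons_val_zero, Matrix.cons_val_succ, Fin.sum_univ_succ,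
    Fin.sum_univ_zero, Matrix.cons_val_one, Matrix.head_cons]
  have hor : ∀ δ : ZMod 2, δ = 0 ∨ δ = 1 := by decide
  rcases hor γ with h | h <;> subst h <;>
    simp only [if_pos rfl, if_neg (show (0:ZMod 2) ≠ 1 by decide),
      if_neg (show (1:ZMod 2) ≠ 0 by decide), eps_one, e20, e21, e02, e03]
  all_goals {
    have hu : ∀ u : M4, u * E 3 3 = u - (u * E 0 0 + u * E 1 1 + u * E 2 2) := by
      intro u
      rw [eq_sub_iff_add_eq]
      conv_rhs => rw [← mul_one u, ← hsum]
      simp only [mul_add]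
      abel
    simp only [if_true, mul_assoc, Emul, mul_one, mul_neg, smul_neg]
    rw [hu c0, hu c1]
    module }
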